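/- Let S ⊆ B(H)_sa be an invex set with respect to η : S × S → B(H)_sa satisfying condition C, and let f : ℝ → ℝ be continuous and operator preinvex with respect to η on S. Then for every A, B ∈ S, with V := A + η(B,A), the following chain of inequalities holds in the operator order: f((A + V)/2) ≤ (1/2)[f((3A + V)/4) + f((A + 3V)/4)] ≤ ∫₀¹ f(A + tη(B,A)) dt ≤ (1/2)[f((A + V)/2) + (f(A) + f(V))/2] ≤ (f(A) + f(B))/2. -/

import Mathlib

open intervalIntegral MeasureTheory Polynomial

section Aux

/-- Real-valued refined Hermite–Hadamard inequalities for a "convex-along-[0,1]" function. -/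
lemma hh_real (ψ : ℝ → ℝ) (hc : ContinuousOn ψ (Set.Icc 0 1))
    (hconv : ∀ s ∈ Set.Icc (0:ℝ) 1, ∀ t ∈ Set.Icc (0:ℝ) 1, ∀ u ∈ Set.Icc (0:ℝ) 1,
      ψ ((1 - u) * s + u * t) ≤ (1 - u) * ψ s + u * ψ t) :
    2⁻¹ * (ψ 4⁻¹ + ψ (3/4)) ≤ (∫ t in (0:ℝ)..1, ψ t) ∧
      (∫ t in (0:ℝ)..1, ψ t) ≤ 2⁻¹ * (ψ 2⁻¹ + 2⁻¹ * (ψ 0 + ψ 1)) := by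
  have huIcc : Set.uIcc (0:ℝ) 1 = Set.Icc 0 1 := Set.uIcc_of_le zero_le_one
  -- integrability of compositions
  have cont2 : ∀ (φ : ℝ → ℝ), Continuous φ → (∀ u ∈ Set.Icc (0:ℝ) 1, φ u ∈ Set.Icc (0:ℝ) 1) →
      IntervalIntegrable (fun u => ψ (φ u)) volume 0 1 := by
    intro φ hφ hmaps
    have : ContinuousOn (fun u => ψ (φ u)) (Set.Icc 0 1) :=
      hc.comp hφ.continuousOn hmaps
    exact (this.mono (by rw [huIcc])).intervalIntegrable
  have hint : IntervalIntegrable ψ volume 0 1 :=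
    cont2 id continuous_id (fun u hu => hu)
  have hint1 : IntervalIntegrable ψ volume 0 (1/2) := by
    have h : ContinuousOn ψ (Set.uIcc 0 (1/2)) := by
      rw [Set.uIcc_of_le (by norm_num : (0:ℝ) ≤ 1/2)]
      exact hc.mono (Set.Icc_subset_Icc le_rfl (by norm_num))
    exact h.intervalIntegrable
  have hint2 : IntervalIntegrable ψ volume (1/2) 1 := by
    have h : ContinuousOn ψ (Set.uIcc (1/2) 1) := by
      rw [Set.uIcc_of_le (by norm_num : (1/2:ℝ) ≤ 1)]
      exact hc.mono (Set.Icc_subset_Icc (by norm_num) le_rfl)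
    exact h.intervalIntegrable
  set I₁ : ℝ := ∫ t in (0:ℝ)..(1/2), ψ t with hI₁
  set I₂ : ℝ := ∫ t in (1/2:ℝ)..1, ψ t with hI₂
  have hIsum : I₁ + I₂ = ∫ t in (0:ℝ)..1, ψ t :=
    integral_add_adjacent_intervals hint1 hint2
  -- substitution identities
  have e1 : (∫ u in (0:ℝ)..1, ψ (u/2)) = 2 * I₁ := by
    rw [intervalIntegral.integral_comp_div ψ (two_ne_zero)]
    norm_num [smul_eq_mul]
    exact hI₁.symm
  have ehalf : (∫ v in (1:ℝ)..2, ψ (v/2)) = 2 * I₂ := by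
    rw [intervalIntegral.integral_comp_div ψ (two_ne_zero)]
    norm_num [smul_eq_mul]
    exact hI₂.symm
  have e2 : (∫ u in (0:ℝ)..1, ψ ((1-u)/2)) = 2 * I₁ := by
    rw [show (fun u : ℝ => ψ ((1-u)/2)) = fun u => (fun v : ℝ => ψ (v/2)) (1 - u) from rfl,
      intervalIntegral.integral_comp_sub_left (fun v : ℝ => ψ (v/2)) 1]
    norm_num [e1]
  have e3 : (∫ u in (0:ℝ)..1, ψ ((1+u)/2)) = 2 * I₂ := by
    rw [show (fun u : ℝ => ψ ((1+u)/2)) = fun u => (fun v : ℝ => ψ (v/2)) (1 + u) from rfl,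
      intervalIntegral.integral_comp_add_left (fun v : ℝ => ψ (v/2)) 1]
    norm_num [ehalf]
  have e4 : (∫ u in (0:ℝ)..1, ψ ((2-u)/2)) = 2 * I₂ := by
    rw [show (fun u : ℝ => ψ ((2-u)/2)) = fun u => (fun v : ℝ => ψ (v/2)) (2 - u) from rfl,
      intervalIntegral.integral_comp_sub_left (fun v : ℝ => ψ (v/2)) 2]
    norm_num [ehalf]
  -- integrability of the pieces
  have i1 : IntervalIntegrable (fun u : ℝ => ψ (u/2)) volume 0 1 := by
    refine cont2 _ ?_ fun u hu => ⟨by linarith [hu.1, hu.2], by linarith [hu.1, hu.2]⟩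
    fun_prop
  have i2 : IntervalIntegrable (fun u : ℝ => ψ ((1-u)/2)) volume 0 1 := by
    refine cont2 _ ?_ fun u hu => ⟨by linarith [hu.1, hu.2], by linarith [hu.1, hu.2]⟩
    fun_prop
  have i3 : IntervalIntegrable (fun u : ℝ => ψ ((1+u)/2)) volume 0 1 := by
    refine cont2 _ ?_ fun u hu => ⟨by linarith [hu.1, hu.2], by linarith [hu.1, hu.2]⟩
    fun_prop
  have i4 : IntervalIntegrable (fun u : ℝ => ψ ((2-u)/2)) volume 0 1 := by
    refine cont2 _ ?_ fun u hu => ⟨by linarith [hu.1, hu.2], by linarith [hu.1, hu.2]⟩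
    fun_prop
  constructor
  · -- left part
    have hmono : (∫ _u in (0:ℝ)..1, (ψ 4⁻¹ + ψ (3/4))) ≤
        ∫ u in (0:ℝ)..1,
          (2⁻¹ * (ψ (u/2) + ψ ((1-u)/2)) + 2⁻¹ * (ψ ((1+u)/2) + ψ ((2-u)/2))) := by
      apply intervalIntegral.integral_mono_on zero_le_one intervalIntegrable_const
      · exact (((i1.add i2).const_mul _).add ((i3.add i4).const_mul _))
      · intro u hu
        have h14 : ψ 4⁻¹ ≤ 2⁻¹ * ψ (u/2) + 2⁻¹ * ψ ((1-u)/2) := by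
          have := hconv (u/2) ⟨by linarith [hu.1], by linarith [hu.2]⟩
            ((1-u)/2) ⟨by linarith [hu.2], by linarith [hu.1]⟩
            2⁻¹ ⟨by norm_num, by norm_num⟩
          rw [show ((1:ℝ) - 2⁻¹) = 2⁻¹ by norm_num] at this
          rw [show (2⁻¹ * (u/2) + 2⁻¹ * ((1-u)/2) : ℝ) = 4⁻¹ by ring] at this
          exact this
        have h34 : ψ (3/4) ≤ 2⁻¹ * ψ ((1+u)/2) + 2⁻¹ * ψ ((2-u)/2) := by
          have := hconv ((1+u)/2) ⟨by linarith [hu.1], by linarith [hu.2]⟩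
            ((2-u)/2) ⟨by linarith [hu.2], by linarith [hu.1]⟩
            2⁻¹ ⟨by norm_num, by norm_num⟩
          rw [show ((1:ℝ) - 2⁻¹) = 2⁻¹ by norm_num] at this
          rw [show (2⁻¹ * ((1+u)/2) + 2⁻¹ * ((2-u)/2) : ℝ) = 3/4 by ring] at this
          exact this
        have := add_le_add h14 h34
        linarith [this]
    rw [intervalIntegral.integral_const] at hmono
    rw [intervalIntegral.integral_add ((i1.add i2).const_mul _) ((i3.add i4).const_mul _),
      intervalIntegral.integral_const_mul, intervalIntegral.integral_const_mul,
      intervalIntegral.integral_add i1 i2, intervalIntegral.integral_add i3 i4,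
      e1, e2, e3, e4] at hmono
    rw [← hIsum]
    simp only [sub_zero, one_smul] at hmono
    linarith
  · -- right part
    have linint : ∀ c d : ℝ, (∫ u in (0:ℝ)..1, ((1-u)*c + u*d)) = 2⁻¹*c + 2⁻¹*d := by
      intro c d
      rw [show (fun u : ℝ => (1-u)*c + u*d) = fun u : ℝ => c + (d - c)*u from by
        funext u; ring]
      rw [intervalIntegral.integral_add intervalIntegrable_const
        (((by fun_prop : Continuous fun u : ℝ => (d - c) * u)).intervalIntegrable _ _),
        intervalIntegral.integral_const_mul, integral_id, intervalIntegral.integral_const]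
      norm_num; ring
    have hm1 : (∫ u in (0:ℝ)..1, ψ (u/2)) ≤ ∫ u in (0:ℝ)..1, ((1-u)*ψ 0 + u*ψ 2⁻¹) := by
      apply intervalIntegral.integral_mono_on zero_le_one i1
      · exact (Continuous.intervalIntegrable (by fun_prop) _ _)
      · intro u hu
        have := hconv 0 ⟨le_rfl, zero_le_one⟩ 2⁻¹ ⟨by norm_num, by norm_num⟩ u hu
        rw [show ((1-u)*(0:ℝ) + u*2⁻¹) = u/2 by ring] at this
        exact this
    have hm2 : (∫ u in (0:ℝ)..1, ψ ((1+u)/2)) ≤ ∫ u in (0:ℝ)..1, ((1-u)*ψ 2⁻¹ + u*ψ 1) := by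
      apply intervalIntegral.integral_mono_on zero_le_one i3
      · exact (Continuous.intervalIntegrable (by fun_prop) _ _)
      · intro u hu
        have := hconv 2⁻¹ ⟨by norm_num, by norm_num⟩ 1 ⟨zero_le_one, le_rfl⟩ u hu
        rw [show ((1-u)*(2⁻¹:ℝ) + u*1) = (1+u)/2 by ring] at this
        exact this
    rw [e1, linint] at hm1
    rw [e3, linint] at hm2
    rw [← hIsum]
    linarith

variable {H : Type*} [NormedAddCommGroup H] [InnerProductSpace ℂ H] [CompleteSpace H]

/-- The real-linear continuous functional `T ↦ re ⟪x, T x⟫`. -/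
noncomputable def hhPhi (x : H) : (H →L[ℂ] H) →L[ℝ] ℝ :=
  RCLike.reCLM.comp ((((innerSL ℂ x)).comp (ContinuousLinearMap.apply ℂ H x)).restrictScalars ℝ)

lemma hhPhi_apply (x : H) (T : H →L[ℂ] H) :
    hhPhi x T = RCLike.re (inner ℂ x (T x) : ℂ) := rfl

lemma hhPhi_mono {T U : H →L[ℂ] H} (h : T ≤ U) (x : H) : hhPhi x T ≤ hhPhi x U := by
  have h' := (ContinuousLinearMap.le_def T U).mp h
  have h2 := h'.re_inner_nonneg_right x
  simp only [hhPhi_apply, ContinuousLinearMap.sub_apply, inner_sub_right, map_sub] at h2 ⊢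
  linarith

lemma hh_le_of_phi {T U : H →L[ℂ] H} (hT : IsSelfAdjoint T) (hU : IsSelfAdjoint U)
    (h : ∀ x, hhPhi x T ≤ hhPhi x U) : T ≤ U := by
  rw [ContinuousLinearMap.le_def]
  refine ⟨(hU.sub hT).isSymmetric, fun x => ?_⟩
  have hx := h x
  simp only [hhPhi_apply] at hx
  rw [ContinuousLinearMap.reApplyInnerSelf, inner_re_symm]
  simp only [ContinuousLinearMap.sub_apply, inner_sub_right, map_sub]
  linarith

lemma hh_integral_selfAdjoint (g : ℝ → H →L[ℂ] H) (hg : IntervalIntegrable g volume 0 1)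
    (hsa : ∀ t, IsSelfAdjoint (g t)) : IsSelfAdjoint (∫ t in (0:ℝ)..1, g t) := by
  have hs := ((starL' ℝ : (H →L[ℂ] H) ≃L[ℝ] (H →L[ℂ] H)).toContinuousLinearMap).intervalIntegral_comp_comm hg
  have heq : ∀ t, (starL' ℝ : (H →L[ℂ] H) ≃L[ℝ] (H →L[ℂ] H)).toContinuousLinearMap (g t) = g t := by
    intro t
    simpa using (hsa t).star_eq
  rw [IsSelfAdjoint]
  calc star (∫ t in (0:ℝ)..1, g t)
      = (starL' ℝ : (H →L[ℂ] H) ≃L[ℝ] (H →L[ℂ] H)).toContinuousLinearMap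
        (∫ t in (0:ℝ)..1, g t) := rfl
    _ = ∫ t in (0:ℝ)..1,
        (starL' ℝ : (H →L[ℂ] H) ≃L[ℝ] (H →L[ℂ] H)).toContinuousLinearMap (g t) := hs.symm
    _ = ∫ t in (0:ℝ)..1, g t := by simp only [heq]

set_option synthInstance.maxHeartbeats 1000000 in
/-- Continuity of `t ↦ f(A + tD)` in operator norm, via Weierstrass approximation. -/
lemma hh_cont [Nontrivial H] (A D : H →L[ℂ] H) (hA : IsSelfAdjoint A) (hD : IsSelfAdjoint D)
    (f : ℝ → ℝ) (hf : Continuous f) :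
    ContinuousOn (fun t : ℝ => cfc f (A + t • D)) (Set.Icc 0 1) := by
  set M : ℝ := ‖A‖ + ‖D‖ with hM
  have hXsa : ∀ t : ℝ, IsSelfAdjoint (A + t • D) := fun t =>
    hA.add ((IsSelfAdjoint.all t).smul hD)
  have hspec : ∀ t ∈ Set.Icc (0:ℝ) 1, ∀ x ∈ spectrum ℝ (A + t • D), x ∈ Set.Icc (-M) M := by
    intro t ht x hx
    have h1 : ‖x‖ ≤ ‖A + t • D‖ := spectrum.norm_le_norm_of_mem hx
    have h2 : ‖A + t • D‖ ≤ M := by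
      refine (norm_add_le _ _).trans ?_
      have : ‖t • D‖ ≤ ‖D‖ := by
        rw [norm_smul, Real.norm_eq_abs, abs_of_nonneg ht.1]
        nlinarith [norm_nonneg D, ht.1, ht.2]
      rw [hM]; linarith
    rw [Real.norm_eq_abs] at h1
    have := abs_le.mp (h1.trans h2)
    exact ⟨this.1, this.2⟩
  have happrox : ∀ n : ℕ, ∃ q : ℝ[X], ∀ x ∈ Set.Icc (-M) M, |eval x q - f x| < 1/(n+1) := by
    intro n
    exact exists_polynomial_near_of_continuousOn (-M) M f hf.continuousOn _ (by positivity)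
  choose q hq using happrox
  have hdist : ∀ (n : ℕ), ∀ t ∈ Set.Icc (0:ℝ) 1,
      ‖cfc f (A + t • D) - aeval (A + t • D) (q n)‖ ≤ 1/(n+1) := by
    intro n t ht
    rw [← cfc_polynomial (q n) (A + t • D) (hXsa t),
      ← cfc_sub f (fun x => eval x (q n)) (A + t • D) (hf.continuousOn)
        ((Polynomial.continuous (q n)).continuousOn)]
    refine norm_cfc_le (by positivity) fun x hx => ?_
    have hxm := hspec t ht x hx
    have := hq n x hxm
    rw [Real.norm_eq_abs, abs_sub_comm]
    linarith
  have hTU : TendstoUniformlyOn (fun (n : ℕ) (t : ℝ) => aeval (A + t • D) (q n))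
      (fun t : ℝ => cfc f (A + t • D)) Filter.atTop (Set.Icc 0 1) := by
    rw [Metric.tendstoUniformlyOn_iff]
    intro ε hε
    obtain ⟨N, hN⟩ := exists_nat_one_div_lt hε
    filter_upwards [Filter.eventually_ge_atTop N] with n hn t ht
    rw [dist_eq_norm]
    have h1 := hdist n t ht
    have h2 : (1:ℝ)/(n+1) ≤ 1/(N+1) :=
      one_div_le_one_div_of_le (by positivity) (by have := (Nat.cast_le (α := ℝ)).mpr hn; linarith)
    linarith
  refine hTU.continuousOn (Filter.Eventually.of_forall fun n => ?_).frequently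
  exact ((Polynomial.continuous_aeval (q n)).comp
    (continuous_const.add (continuous_id.smul continuous_const))).continuousOn

end Aux

set_option maxHeartbeats 2000000 in
set_option synthInstance.maxHeartbeats 1000000 in
/-- Refined Hermite–Hadamard chain for operator preinvex functions:
`f((A+V)/2) ≤ (1/2)[f((3A+V)/4) + f((A+3V)/4)] ≤ ∫₀¹ f(A + tη(B,A)) dt
  ≤ (1/2)[f((A+V)/2) + (f(A)+f(V))/2] ≤ (f(A)+f(B))/2`
in the operator order, where `V = A + η(B,A)`. -/
theorem hermite_hadamard_chain_operator_preinvex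
    {H : Type*} [NormedAddCommGroup H] [InnerProductSpace ℂ H] [CompleteSpace H]
    (S : Set (H →L[ℂ] H)) (hSsa : ∀ A ∈ S, IsSelfAdjoint A)
    (η : (H →L[ℂ] H) → (H →L[ℂ] H) → (H →L[ℂ] H))
    (hinvex : ∀ A ∈ S, ∀ B ∈ S, ∀ t ∈ Set.Icc (0:ℝ) 1, A + t • η B A ∈ S)
    (hC1 : ∀ A ∈ S, ∀ B ∈ S, ∀ t ∈ Set.Icc (0:ℝ) 1,
      η A (A + t • η B A) = (-t) • η B A)
    (hC2 : ∀ A ∈ S, ∀ B ∈ S, ∀ t ∈ Set.Icc (0:ℝ) 1,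
      η B (A + t • η B A) = (1 - t) • η B A)
    (f : ℝ → ℝ) (hf : Continuous f)
    (hpreinvex : ∀ A ∈ S, ∀ B ∈ S, ∀ t ∈ Set.Icc (0:ℝ) 1,
      cfc f (A + t • η B A) ≤ (1 - t) • cfc f A + t • cfc f B) :
    ∀ A ∈ S, ∀ B ∈ S, ∀ V : H →L[ℂ] H, V = A + η B A →
      cfc f ((2:ℝ)⁻¹ • (A + V)) ≤
        (2:ℝ)⁻¹ • (cfc f ((4:ℝ)⁻¹ • ((3:ℝ) • A + V)) + cfc f ((4:ℝ)⁻¹ • (A + (3:ℝ) • V))) ∧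
      (2:ℝ)⁻¹ • (cfc f ((4:ℝ)⁻¹ • ((3:ℝ) • A + V)) + cfc f ((4:ℝ)⁻¹ • (A + (3:ℝ) • V))) ≤
        (∫ t in (0:ℝ)..1, cfc f (A + t • η B A)) ∧
      (∫ t in (0:ℝ)..1, cfc f (A + t • η B A)) ≤
        (2:ℝ)⁻¹ • (cfc f ((2:ℝ)⁻¹ • (A + V)) + (2:ℝ)⁻¹ • (cfc f A + cfc f V)) ∧
      (2:ℝ)⁻¹ • (cfc f ((2:ℝ)⁻¹ • (A + V)) + (2:ℝ)⁻¹ • (cfc f A + cfc f V)) ≤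
        (2:ℝ)⁻¹ • (cfc f A + cfc f B) := by
  intro A hA B hB V hV
  subst hV
  rcases subsingleton_or_nontrivial H with hH | hH
  · have hsub : Subsingleton (H →L[ℂ] H) :=
      ⟨fun T U => ContinuousLinearMap.ext fun x => Subsingleton.elim _ _⟩
    exact ⟨le_of_eq (Subsingleton.elim _ _), le_of_eq (Subsingleton.elim _ _),
      le_of_eq (Subsingleton.elim _ _), le_of_eq (Subsingleton.elim _ _)⟩
  · -- nontrivial case
    have hAsa := hSsa A hA
    have hVS : A + (1:ℝ) • η B A ∈ S := hinvex A hA B hB 1 ⟨zero_le_one, le_rfl⟩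
    have hDsa : IsSelfAdjoint (η B A) := by
      have h := (hSsa _ hVS).sub hAsa
      rw [one_smul, add_sub_cancel_left] at h
      exact h
    have hXS : ∀ t ∈ Set.Icc (0:ℝ) 1, A + t • η B A ∈ S := fun t ht => hinvex A hA B hB t ht
    set g : ℝ → (H →L[ℂ] H) := fun t => cfc f (A + t • η B A) with hgdef
    have hgsa : ∀ t, IsSelfAdjoint (g t) := fun t => cfc_predicate f _
    -- extended condition C
    have etaext : ∀ s ∈ Set.Icc (0:ℝ) 1, ∀ t ∈ Set.Icc (0:ℝ) 1,
        η (A + t • η B A) (A + s • η B A) = (t - s) • η B A := by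
      intro s hs t ht
      rcases le_or_gt t s with h1 | h2
      · rcases eq_or_lt_of_le ht.2 with ht1 | ht1
        · subst ht1
          have hs1 : s = 1 := le_antisymm hs.2 h1
          subst hs1
          have h0 := hC1 (A + (1:ℝ) • η B A) hVS B hB 0 ⟨le_rfl, zero_le_one⟩
          simp only [zero_smul, add_zero, neg_zero] at h0
          rw [h0, sub_self, zero_smul]
        · -- t < 1
          have h1t : (0:ℝ) < 1 - t := by linarith
          have hrmem : (s - t)/(1 - t) ∈ Set.Icc (0:ℝ) 1 :=
            ⟨div_nonneg (by linarith) h1t.le, (div_le_one h1t).mpr (by linarith [hs.2])⟩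
          have hZ : A + t • η B A ∈ S := hXS t ht
          have key := hC1 (A + t • η B A) hZ B hB _ hrmem
          rw [hC2 A hA B hB t ht] at key
          have harg : A + t • η B A + ((s - t)/(1 - t)) • ((1 - t) • η B A)
              = A + s • η B A := by
            rw [smul_smul, add_assoc, ← add_smul, div_mul_cancel₀ _ h1t.ne']
            congr 2
            ring
          rw [harg] at key
          rw [key, smul_smul]
          congr 1
          rw [neg_mul, div_mul_cancel₀ _ h1t.ne']
          ring
      · -- s < t
        have ht0 : (0:ℝ) < t := lt_of_le_of_lt hs.1 h2
        have hrmem : (t - s)/t ∈ Set.Icc (0:ℝ) 1 :=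
          ⟨div_nonneg (by linarith) ht0.le, (div_le_one ht0).mpr (by linarith [hs.1])⟩
        have hZ : A + t • η B A ∈ S := hXS t ht
        have key := hC1 (A + t • η B A) hZ A hA _ hrmem
        rw [hC1 A hA B hB t ht] at key
        have harg : A + t • η B A + ((t - s)/t) • ((-t) • η B A) = A + s • η B A := by
          rw [smul_smul, add_assoc, ← add_smul, mul_neg, div_mul_cancel₀ _ ht0.ne']
          congr 2
          ring
        rw [harg] at key
        rw [key, smul_smul]
        congr 1
        rw [neg_mul, mul_neg, div_mul_cancel₀ _ ht0.ne']
        ring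
    -- operator convexity along the path
    have gconv : ∀ s ∈ Set.Icc (0:ℝ) 1, ∀ t ∈ Set.Icc (0:ℝ) 1, ∀ u ∈ Set.Icc (0:ℝ) 1,
        g ((1-u)*s + u*t) ≤ (1-u) • g s + u • g t := by
      intro s hs t ht u hu
      have key := hpreinvex (A + s • η B A) (hXS s hs) (A + t • η B A) (hXS t ht) u hu
      rw [etaext s hs t ht] at key
      have harg : A + s • η B A + u • ((t - s) • η B A)
          = A + ((1-u)*s + u*t) • η B A := by
        rw [smul_smul, add_assoc, ← add_smul]
        congr 2
        ring
      rw [harg] at key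
      exact key
    -- continuity and integrability
    have hg_cont : ContinuousOn g (Set.Icc 0 1) := hh_cont A (η B A) hAsa hDsa f hf
    have hg_int : IntervalIntegrable g volume 0 1 := by
      refine (hg_cont.mono ?_).intervalIntegrable
      rw [Set.uIcc_of_le zero_le_one]
    have hJsa : IsSelfAdjoint (∫ t in (0:ℝ)..1, g t) :=
      hh_integral_selfAdjoint g hg_int hgsa
    -- scalar reductions
    have hψconv : ∀ x : H, ∀ s ∈ Set.Icc (0:ℝ) 1, ∀ t ∈ Set.Icc (0:ℝ) 1,
        ∀ u ∈ Set.Icc (0:ℝ) 1,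
        hhPhi x (g ((1-u)*s + u*t)) ≤ (1-u) * hhPhi x (g s) + u * hhPhi x (g t) := by
      intro x s hs t ht u hu
      have := hhPhi_mono (gconv s hs t ht u hu) x
      simpa [map_add, _root_.map_smul, smul_eq_mul] using this
    have hψcont : ∀ x : H, ContinuousOn (fun t => hhPhi x (g t)) (Set.Icc 0 1) :=
      fun x => (hhPhi x).continuous.comp_continuousOn hg_cont
    have hh := fun x : H => hh_real (fun t => hhPhi x (g t)) (hψcont x) (hψconv x)
    have hcomm : ∀ x : H,
        (∫ t in (0:ℝ)..1, hhPhi x (g t)) = hhPhi x (∫ t in (0:ℝ)..1, g t) :=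
      fun x => (hhPhi x).intervalIntegral_comp_comm hg_int
    -- identify the special points
    have e12 : (2:ℝ)⁻¹ • (A + (A + η B A)) = A + (2⁻¹:ℝ) • η B A := by module
    have e14 : (4:ℝ)⁻¹ • ((3:ℝ) • A + (A + η B A)) = A + (4⁻¹:ℝ) • η B A := by module
    have e34 : (4:ℝ)⁻¹ • (A + (3:ℝ) • (A + η B A)) = A + ((3/4:ℝ)) • η B A := by module
    have hg0 : g 0 = cfc f A := by
      show cfc f (A + (0:ℝ) • η B A) = cfc f A
      rw [zero_smul, add_zero]
    have hg1 : g 1 = cfc f (A + η B A) := by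
      show cfc f (A + (1:ℝ) • η B A) = cfc f (A + η B A)
      rw [one_smul]
    rw [e12, e14, e34]
    -- the four inequalities
    have h1 : g 2⁻¹ ≤ (2:ℝ)⁻¹ • (g 4⁻¹ + g (3/4)) := by
      have := gconv 4⁻¹ ⟨by norm_num, by norm_num⟩ (3/4) ⟨by norm_num, by norm_num⟩
        2⁻¹ ⟨by norm_num, by norm_num⟩
      rw [show ((1:ℝ) - 2⁻¹) = 2⁻¹ by norm_num] at this
      rw [show ((2⁻¹:ℝ) * 4⁻¹ + 2⁻¹ * (3/4)) = 2⁻¹ by norm_num] at this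
      rw [← smul_add] at this
      exact this
    have h2 : (2:ℝ)⁻¹ • (g 4⁻¹ + g (3/4)) ≤ ∫ t in (0:ℝ)..1, g t := by
      apply hh_le_of_phi ((IsSelfAdjoint.all _).smul ((hgsa _).add (hgsa _))) hJsa
      intro x
      have hx := (hh x).1
      rw [hcomm x] at hx
      simp only [map_add, _root_.map_smul, smul_eq_mul]
      linarith
    have h3 : (∫ t in (0:ℝ)..1, g t) ≤
        (2:ℝ)⁻¹ • (g 2⁻¹ + (2:ℝ)⁻¹ • (g 0 + g 1)) := by
      apply hh_le_of_phi hJsa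
        ((IsSelfAdjoint.all _).smul ((hgsa _).add
          ((IsSelfAdjoint.all _).smul ((hgsa _).add (hgsa _)))))
      intro x
      have hx := (hh x).2
      rw [hcomm x] at hx
      simp only [map_add, _root_.map_smul, smul_eq_mul]
      linarith
    have h4 : (2:ℝ)⁻¹ • (g 2⁻¹ + (2:ℝ)⁻¹ • (g 0 + g 1)) ≤
        (2:ℝ)⁻¹ • (cfc f A + cfc f B) := by
      have hhalf := hpreinvex A hA B hB 2⁻¹ ⟨by norm_num, by norm_num⟩
      rw [show ((1:ℝ) - 2⁻¹) = 2⁻¹ by norm_num] at hhalf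
      have hone := hpreinvex A hA B hB 1 ⟨zero_le_one, le_rfl⟩
      simp only [sub_self, zero_smul, zero_add, one_smul] at hone
      calc (2:ℝ)⁻¹ • (g 2⁻¹ + (2:ℝ)⁻¹ • (g 0 + g 1))
          ≤ (2:ℝ)⁻¹ • (((2:ℝ)⁻¹ • cfc f A + (2:ℝ)⁻¹ • cfc f B)
              + (2:ℝ)⁻¹ • (cfc f A + cfc f B)) := by
            refine smul_le_smul_of_nonneg_left ?_ (by norm_num)
            refine add_le_add hhalf ?_
            refine smul_le_smul_of_nonneg_left ?_ (by norm_num)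
            rw [hg0, hg1]
            exact add_le_add le_rfl hone
        _ = (2:ℝ)⁻¹ • (cfc f A + cfc f B) := by module
    rw [hg0, hg1] at h3 h4
    exact ⟨h1, h2, h3, h4⟩
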